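/- Let γ ∈ (0,1) and define p_t(b) for b > 0 by p₁(b) = (γb/(γb+1))^γ and p_t(b) = [ p_{t-1}(γb+1) · γb / (γb + 1 - p_{t-1}(γb+1)) ]^γ. Then for each fixed t ≥ 1, the function b ↦ p_t(b) is (strictly) monotone increasing on (0, ∞). -/
import Mathlib


theorem pgss_p_mono_in_b (γ : ℝ) (hγ0 : 0 < γ) (hγ1 : γ < 1)
    (p : ℕ → ℝ → ℝ)
    (h1 : ∀ b : ℝ, 0 < b → p 1 b = (γ * b / (γ * b + 1)) ^ γ)
    (hrec : ∀ t : ℕ, 1 ≤ t → ∀ b : ℝ, 0 < b →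
      p (t + 1) b = (p t (γ * b + 1) * (γ * b) / (γ * b + 1 - p t (γ * b + 1))) ^ γ)
    (hbound : ∀ t : ℕ, 1 ≤ t → ∀ b : ℝ, 0 < b → 0 < p t b ∧ p t b < 1) :
    ∀ t : ℕ, 1 ≤ t → StrictMonoOn (fun b => p t b) (Set.Ioi (0 : ℝ)) := by
  intro t ht
  induction t with
  | zero => omega
  | succ n ih =>
    rcases Nat.eq_zero_or_pos n with hn0 | hn
    · subst hn0
      intro b1 hb1 b2 hb2 hlt
      simp only [Set.mem_Ioi] at hb1 hb2
      simp only
      rw [h1 b1 hb1, h1 b2 hb2]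
      have hc1 : 0 < γ * b1 := mul_pos hγ0 hb1
      have hc2 : 0 < γ * b2 := mul_pos hγ0 hb2
      apply Real.rpow_lt_rpow
      · positivity
      · rw [div_lt_div_iff₀ (by linarith) (by linarith)]
        nlinarith [mul_lt_mul_of_pos_left hlt hγ0]
      · exact hγ0
    · intro b1 hb1 b2 hb2 hlt
      simp only [Set.mem_Ioi] at hb1 hb2
      simp only
      rw [hrec n hn b1 hb1, hrec n hn b2 hb2]
      set c1 := γ * b1 with hc1def
      set c2 := γ * b2 with hc2def
      have hc1 : 0 < c1 := mul_pos hγ0 hb1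
      have hc2 : 0 < c2 := mul_pos hγ0 hb2
      have hcc : c1 < c2 := mul_lt_mul_of_pos_left hlt hγ0
      set q1 := p n (c1 + 1) with hq1def
      set q2 := p n (c2 + 1) with hq2def
      obtain ⟨hq1pos, hq1lt⟩ := hbound n hn (c1 + 1) (by linarith)
      obtain ⟨hq2pos, hq2lt⟩ := hbound n hn (c2 + 1) (by linarith)
      have hqq : q1 < q2 := ih hn (Set.mem_Ioi.mpr (by linarith)) (Set.mem_Ioi.mpr (by linarith)) (by linarith)
      have hd1 : 0 < c1 + 1 - q1 := by linarith
      have hd2 : 0 < c2 + 1 - q2 := by linarith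
      apply Real.rpow_lt_rpow
      · positivity
      · rw [div_lt_div_iff₀ hd1 hd2]
        nlinarith [mul_pos (mul_pos (sub_pos.mpr hcc) hq2pos) (sub_pos.mpr hq1lt),
          mul_pos (mul_pos (sub_pos.mpr hqq) hc1) (show (0:ℝ) < c2 + 1 by linarith)]
      · exact hγ0
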